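/- Let 0 < m ≤ L and for σ² > 0 define m(σ²) = m + 1/σ², L(σ²) = L + 1/σ², κ(σ²) = 2m(σ²)L(σ²)/(m(σ²)+L(σ²)). Then the function σ² ↦ κ(σ²)·σ² is nondecreasing on (0, ∞), and √(m(σ²))/(κ(σ²)·σ) is nonincreasing in σ² and is at most 1. -/

import Mathlib

private lemma key1 (m L : ℝ) (hm : 0 < m) (hmL : m ≤ L) (s : ℝ) (hs : 0 < s) :
    (2 * (m + 1 / s) * (L + 1 / s) / ((m + 1 / s) + (L + 1 / s)) * s)
      = 2 * (m*s+1) * (L*s+1) / ((m+L)*s+2) := by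
  have hms : m + 1/s = (m*s+1)/s := by field_simp
  have hLs : L + 1/s = (L*s+1)/s := by field_simp
  have hu : (0:ℝ) < m*s+1 := by nlinarith
  have hv : (0:ℝ) < L*s+1 := by nlinarith
  have h2 : (0:ℝ) < (m+L)*s+2 := by nlinarith
  rw [hms, hLs, div_add_div _ _ (ne_of_gt hs) (ne_of_gt hs)]
  field_simp
  ring

private lemma key2 (m L : ℝ) (hm : 0 < m) (hmL : m ≤ L) (s : ℝ) (hs : 0 < s) :
    Real.sqrt (m + 1 / s) /
          (2 * (m + 1 / s) * (L + 1 / s) / ((m + 1 / s) + (L + 1 / s)) * Real.sqrt s)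
      = Real.sqrt (m*s+1) / (2*(L*s+1)) + 1 / (2 * Real.sqrt (m*s+1)) := by
  have hu : (0:ℝ) < m*s+1 := by nlinarith
  have hv : (0:ℝ) < L*s+1 := by nlinarith
  have hms : m + 1/s = (m*s+1)/s := by field_simp
  have hLs : L + 1/s = (L*s+1)/s := by field_simp
  have hsq : Real.sqrt (m + 1/s) = Real.sqrt (m*s+1) / Real.sqrt s := by
    rw [hms, Real.sqrt_div hu.le]
  have hb : (0:ℝ) < Real.sqrt s := Real.sqrt_pos.2 hs
  have ha : (0:ℝ) < Real.sqrt (m*s+1) := Real.sqrt_pos.2 hu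
  have hbb : Real.sqrt s * Real.sqrt s = s := Real.mul_self_sqrt hs.le
  have haa : Real.sqrt (m*s+1) * Real.sqrt (m*s+1) = m*s+1 := Real.mul_self_sqrt hu.le
  have step : Real.sqrt (m + 1 / s) /
          (2 * (m + 1 / s) * (L + 1 / s) / ((m + 1 / s) + (L + 1 / s)) * Real.sqrt s)
      = Real.sqrt (m*s+1) * ((m*s+1)+(L*s+1)) / (2 * (m*s+1) * (L*s+1)) := by
    rw [hsq, hms, hLs, div_add_div _ _ (ne_of_gt hs) (ne_of_gt hs)]
    have hv' : L*s+1 ≠ 0 := hv.ne'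
    have hu' : m*s+1 ≠ 0 := hu.ne'
    field_simp
    rw [Real.sq_sqrt hs.le]
  rw [step]
  have hv' : L*s+1 ≠ 0 := hv.ne'
  have hu' : m*s+1 ≠ 0 := hu.ne'
  field_simp
  have hv'' : s*L+1 ≠ 0 := by nlinarith
  rw [Real.sq_sqrt hu.le]
  field_simp

theorem stmt10 (m L : ℝ) (hm : 0 < m) (hmL : m ≤ L) :
    MonotoneOn (fun s : ℝ =>
        2 * (m + 1 / s) * (L + 1 / s) / ((m + 1 / s) + (L + 1 / s)) * s)
      (Set.Ioi 0) ∧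
    AntitoneOn (fun s : ℝ =>
        Real.sqrt (m + 1 / s) /
          (2 * (m + 1 / s) * (L + 1 / s) / ((m + 1 / s) + (L + 1 / s)) * Real.sqrt s))
      (Set.Ioi 0) ∧
    ∀ s : ℝ, 0 < s →
      Real.sqrt (m + 1 / s) /
          (2 * (m + 1 / s) * (L + 1 / s) / ((m + 1 / s) + (L + 1 / s)) * Real.sqrt s) ≤ 1 := by
  refine ⟨?_, ?_, ?_⟩
  · intro s hs t ht hst
    simp only [Set.mem_Ioi] at hs ht
    simp only
    rw [key1 m L hm hmL s hs, key1 m L hm hmL t ht]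
    rw [div_le_div_iff₀ (by nlinarith) (by nlinarith)]
    have hL : (0:ℝ) < L := lt_of_lt_of_le hm hmL
    nlinarith [mul_nonneg (sub_nonneg.2 hst)
      (by nlinarith [mul_pos (mul_pos hm hL) (mul_pos hs ht),
        mul_pos (mul_pos hm hL) hs, mul_pos (mul_pos hm hL) ht] :
        (0:ℝ) ≤ m*L*(m+L)*t*s + 2*m*L*(t+s) + (m+L)),
      mul_pos hs ht]
  · intro s hs t ht hst
    simp only [Set.mem_Ioi] at hs ht
    simp only
    rw [key2 m L hm hmL s hs, key2 m L hm hmL t ht]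
    have hus : (0:ℝ) < m*s+1 := by nlinarith
    have hut : (0:ℝ) < m*t+1 := by nlinarith
    have hvs : (0:ℝ) < L*s+1 := by nlinarith
    have hvt : (0:ℝ) < L*t+1 := by nlinarith
    have has : (0:ℝ) < Real.sqrt (m*s+1) := Real.sqrt_pos.2 hus
    have hat : (0:ℝ) < Real.sqrt (m*t+1) := Real.sqrt_pos.2 hut
    have hle : Real.sqrt (m*s+1) ≤ Real.sqrt (m*t+1) :=
      Real.sqrt_le_sqrt (by nlinarith)
    have t2 : 1 / (2 * Real.sqrt (m*t+1)) ≤ 1 / (2 * Real.sqrt (m*s+1)) := by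
      apply one_div_le_one_div_of_le (by positivity)
      linarith
    have t1 : Real.sqrt (m*t+1) / (2*(L*t+1)) ≤ Real.sqrt (m*s+1) / (2*(L*s+1)) := by
      rw [div_le_div_iff₀ (by positivity) (by positivity)]
      have hsq : (Real.sqrt (m*t+1) * (2*(L*s+1)))^2 ≤ (Real.sqrt (m*s+1) * (2*(L*t+1)))^2 := by
        have e1 : Real.sqrt (m*t+1)^2 = m*t+1 := Real.sq_sqrt hut.le
        have e2 : Real.sqrt (m*s+1)^2 = m*s+1 := Real.sq_sqrt hus.le
        have hL : (0:ℝ) < L := lt_of_lt_of_le hm hmL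
        simp only [mul_pow]; rw [e1, e2]
        nlinarith [mul_nonneg (sub_nonneg.2 hst)
          (by nlinarith [mul_pos (mul_pos hm (mul_pos hL hL)) (mul_pos hs ht),
            mul_pos (mul_pos hL hL) hs, mul_pos (mul_pos hL hL) ht] :
            (0:ℝ) ≤ 2*L - m + L^2*(t+s) + m*L^2*s*t)]
      have h := Real.sqrt_le_sqrt hsq
      rwa [Real.sqrt_sq (by positivity), Real.sqrt_sq (by positivity)] at h
    linarith
  · intro s hs
    rw [key2 m L hm hmL s hs]
    have hus : (0:ℝ) < m*s+1 := by nlinarith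
    have hvs : (0:ℝ) < L*s+1 := by nlinarith
    have h1 : (1:ℝ) ≤ Real.sqrt (m*s+1) := by
      nlinarith [Real.sq_sqrt hus.le, Real.sqrt_nonneg (m*s+1),
        sq_nonneg (Real.sqrt (m*s+1) - 1)]
    have h2 : Real.sqrt (m*s+1) ≤ m*s+1 := by
      nlinarith [Real.mul_self_sqrt hus.le]
    have t1 : Real.sqrt (m*s+1) / (2*(L*s+1)) ≤ 1/2 := by
      rw [div_le_div_iff₀ (by positivity) (by norm_num)]
      nlinarith
    have t2 : 1 / (2 * Real.sqrt (m*s+1)) ≤ 1/2 := by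
      rw [div_le_div_iff₀ (by positivity) (by norm_num)]
      linarith
    linarith
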